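/- Suppose U is an ultrafilter over κ such that for any family S ⊆ U of cardinality at most λ, there is a set X of cardinality at most μ meeting every member of S. Then for any ordinal α with μ^{|α|} < λ, U is (λ,λ';α)-nonregular for all λ' < λ; and if μ^{|α|} < cf(λ), then U is (λ,λ;α)-nonregular. -/

import Mathlib

universe u

namespace UMeas

variable {A : Type u}

/-- The first `n` values of an infinite sequence, as a list. -/
def seg (s : ℕ → A) (n : ℕ) : List A := List.ofFn (fun i : Fin n => s i)

/-- `T` is a `U`-branching tree: a set of finite sequences closed under initial
segments, containing the empty sequence, whose branching sets are in `U`. -/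
def IsUTree (U : Ultrafilter A) (T : Set (List A)) : Prop :=
  ([] ∈ T) ∧ (∀ σ ∈ T, ∀ τ : List A, τ <+: σ → τ ∈ T) ∧
    ∀ σ ∈ T, {a : A | σ ++ [a] ∈ T} ∈ U

/-- The set of infinite branches through `T`. -/
def branches (T : Set (List A)) : Set (ℕ → A) := {s | ∀ n, seg s n ∈ T}

/-- Concatenation `σ⌢s` of a finite sequence with an infinite sequence. -/
def app (σ : List A) (s : ℕ → A) : ℕ → A :=
  fun n => if h : n < σ.length then σ.get ⟨n, h⟩ else s (n - σ.length)

/-- The section `X↾σ = {s | σ⌢s ∈ X}`. -/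
def sect (X : Set (ℕ → A)) (σ : List A) : Set (ℕ → A) := {s | app σ s ∈ X}

def ULarge (U : Ultrafilter A) (X : Set (ℕ → A)) : Prop :=
  ∃ T, IsUTree U T ∧ branches T ⊆ X

def USmall (U : Ultrafilter A) (X : Set (ℕ → A)) : Prop :=
  ∃ T, IsUTree U T ∧ branches T ∩ X = ∅

def UDetermined (U : Ultrafilter A) (X : Set (ℕ → A)) : Prop :=
  ULarge U X ∨ USmall U X

def UNull (U : Ultrafilter A) (X : Set (ℕ → A)) : Prop :=
  ∀ σ : List A, USmall U (sect X σ)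

def UMeasurable (U : Ultrafilter A) (X : Set (ℕ → A)) : Prop :=
  ∀ σ : List A, UDetermined U (sect X σ)

end UMeas

namespace UMeas

/-- Sequences of ordinal length `β` with values in `A`. -/
def OSeq (A : Type u) (β : Ordinal.{u}) := ∀ γ : Ordinal.{u}, γ < β → A

/-- Restriction `s↾γ` of an ordinal-length sequence. -/
def ores {A : Type u} {β : Ordinal.{u}} (s : OSeq A β) (γ : Ordinal.{u}) (h : γ ≤ β) :
    OSeq A γ := fun δ hδ => s δ (hδ.trans_le h)

/-- Extension `s⌢⟨a⟩` of an ordinal-length sequence by one element. -/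
noncomputable def oext {A : Type u} {β : Ordinal.{u}} (s : OSeq A β) (a : A) : OSeq A (β + 1) :=
  fun δ hδ => if h : δ < β then s δ h else a

/-- A closed `U`-branching tree of height `α`: for each `β`, `mem β` is the set of
sequences of length `β` in the tree (only levels `β < α` are relevant). -/
structure ClosedUBT (A : Type u) (U : Ultrafilter A) (α : Ordinal.{u}) where
  mem : ∀ β : Ordinal.{u}, Set (OSeq A β)
  isTree : ∀ β γ : Ordinal.{u}, β < α → (h : γ ≤ β) → ∀ s ∈ mem β, ores s γ h ∈ mem γ
  succ : ∀ β : Ordinal.{u}, β + 1 < α → ∀ s ∈ mem β, {a : A | oext s a ∈ mem (β + 1)} ∈ U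
  nonsucc : ∀ β : Ordinal.{u}, β < α → (¬ ∃ γ : Ordinal.{u}, β = γ + 1) →
    ∀ s : OSeq A β, s ∈ mem β ↔ ∀ γ : Ordinal.{u}, (h : γ < β) → ores s γ h.le ∈ mem γ

/-- `U` is `(l, m; α)`-regular: there is a family of `l` closed `U`-branching trees of
height `α + 1` such that no subfamily of size `m` has a common maximal element. -/
def LMARegular {A : Type u} (U : Ultrafilter A) (l m : Cardinal.{u}) (α : Ordinal.{u}) : Prop :=
  ∃ T : (Cardinal.ord l).ToType → ClosedUBT A U (α + 1),
    ∀ S : Set (Cardinal.ord l).ToType, Cardinal.mk ↥S = m →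
      ¬ ∃ s : OSeq A α, ∀ β ∈ S, s ∈ (T β).mem α

end UMeas

section Aux17
open UMeas Cardinal Ordinal

variable {A : Type u} {I : Type u} [Nonempty A]
variable (U : Ultrafilter A) (α : Ordinal.{u}) (m : Cardinal.{u})
  (T : I → ClosedUBT A U (α + 1))

noncomputable def aPick : Ordinal.{u} → Set A × (I → A) :=
  fun γ => Classical.epsilon fun p =>
    Cardinal.mk p.1 ≤ m ∧ ∀ i : I, p.2 i ∈ p.1 ∧
      oext (fun δ (hδ : δ < γ) => (aPick δ).2 i) (p.2 i) ∈ (T i).mem (γ + 1)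
termination_by γ => γ
decreasing_by exact hδ

noncomputable def aNode (i : I) (γ : Ordinal.{u}) : OSeq A γ :=
  fun δ _ => (aPick U α m T δ).2 i

theorem aPick_eq (γ : Ordinal.{u}) : aPick U α m T γ = Classical.epsilon fun p =>
    Cardinal.mk p.1 ≤ m ∧ ∀ i : I, p.2 i ∈ p.1 ∧
      oext (aNode U α m T i γ) (p.2 i) ∈ (T i).mem (γ + 1) := by
  conv_lhs => rw [aPick.eq_def]
  rfl

theorem aPick_spec (hfam : ∀ B : I → Set A, (∀ i, B i ∈ U) →
      ∃ X : Set A, Cardinal.mk ↥X ≤ m ∧ ∀ i, (X ∩ B i).Nonempty)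
    {γ : Ordinal.{u}} (hγ : γ < α)
    (hmem : ∀ i, aNode U α m T i γ ∈ (T i).mem γ) :
    Cardinal.mk ↥(aPick U α m T γ).1 ≤ m ∧ ∀ i : I,
      (aPick U α m T γ).2 i ∈ (aPick U α m T γ).1 ∧
      oext (aNode U α m T i γ) ((aPick U α m T γ).2 i) ∈ (T i).mem (γ + 1) := by
  have hB : ∀ i, {a : A | oext (aNode U α m T i γ) a ∈ (T i).mem (γ + 1)} ∈ U := fun i =>
    (T i).succ γ (by rw [Ordinal.add_one_eq_succ, Ordinal.add_one_eq_succ]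
                     exact Order.succ_lt_succ hγ) _ (hmem i)
  obtain ⟨X, hX, hmeet⟩ := hfam _ hB
  have hex : ∃ p : Set A × (I → A), Cardinal.mk ↥p.1 ≤ m ∧ ∀ i : I, p.2 i ∈ p.1 ∧
      oext (aNode U α m T i γ) (p.2 i) ∈ (T i).mem (γ + 1) :=
    ⟨(X, fun i => (hmeet i).some), hX, fun i => ⟨((hmeet i).some_mem).1, ((hmeet i).some_mem).2⟩⟩
  rw [aPick_eq]
  exact Classical.epsilon_spec hex

theorem aNode_succ (i : I) (δ : Ordinal.{u}) :
    aNode U α m T i (δ + 1) = oext (aNode U α m T i δ) ((aPick U α m T δ).2 i) := by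
  funext ε hε
  show (aPick U α m T ε).2 i = _
  unfold oext
  by_cases h : ε < δ
  · rw [dif_pos h]
    rfl
  · have h1 : ε ≤ δ := by
      rw [Ordinal.add_one_eq_succ] at hε
      exact Order.lt_succ_iff.mp hε
    have : ε = δ := le_antisymm h1 (not_lt.mp h)
    subst this
    rw [dif_neg h]

theorem aNode_mem (hfam : ∀ B : I → Set A, (∀ i, B i ∈ U) →
      ∃ X : Set A, Cardinal.mk ↥X ≤ m ∧ ∀ i, (X ∩ B i).Nonempty) : ∀ γ : Ordinal.{u}, γ ≤ α → ∀ i, aNode U α m T i γ ∈ (T i).mem γ := by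
  intro γ
  induction γ using Ordinal.induction with
  | h γ IH =>
    intro hγα i
    by_cases hs : ∃ δ : Ordinal.{u}, γ = δ + 1
    · obtain ⟨δ, rfl⟩ := hs
      have hδ : δ < δ + 1 := by rw [Ordinal.add_one_eq_succ]; exact Order.lt_succ δ
      have hδα : δ < α := lt_of_lt_of_le hδ hγα
      have hmem := fun j => IH δ hδ hδα.le j
      rw [aNode_succ]
      exact ((aPick_spec U α m T hfam hδα hmem).2 i).2
    · refine ((T i).nonsucc γ ?_ hs _).mpr ?_
      · rw [Ordinal.add_one_eq_succ]; exact Order.lt_succ_iff.mpr hγα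
      · intro δ hδ
        exact IH δ hδ (hδ.le.trans hγα) i

theorem aMaster (hfam : ∀ B : I → Set A, (∀ i, B i ∈ U) →
      ∃ X : Set A, Cardinal.mk ↥X ≤ m ∧ ∀ i, (X ∩ B i).Nonempty) :
    ∃ (W : Type u) (Ψ : I → W) (Φ : I → OSeq A α),
      Cardinal.mk W ≤ m ^ α.card ∧ (∀ i, Φ i ∈ (T i).mem α) ∧
      ∀ i j, Ψ i = Ψ j → Φ i = Φ j := by
  classical
  have hnm := aNode_mem U α m T hfam
  set q : α.ToType → Ordinal.{u} := fun x => (((Ordinal.ToType.mk (o := α))).symm x).1 with hq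
  have hqlt : ∀ x, q x < α := fun x => (((Ordinal.ToType.mk (o := α))).symm x).2
  have hspec := fun x : α.ToType => aPick_spec U α m T hfam
    (hqlt x) (fun j => hnm _ (hqlt x).le j)
  refine ⟨∀ x : α.ToType, ↥((aPick U α m T (q x)).1),
    fun i x => ⟨(aPick U α m T (q x)).2 i, ((hspec x).2 i).1⟩,
    fun i => aNode U α m T i α, ?_, fun i => hnm α le_rfl i, ?_⟩
  · calc Cardinal.mk (∀ x : α.ToType, ↥((aPick U α m T (q x)).1))
        = Cardinal.prod (fun x => Cardinal.mk ↥((aPick U α m T (q x)).1)) :=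
          Cardinal.mk_pi _
      _ ≤ Cardinal.prod (fun _ : α.ToType => m) :=
          Cardinal.prod_le_prod _ _ (fun x => (hspec x).1)
      _ = m ^ Cardinal.mk α.ToType := Cardinal.prod_const' _ _
      _ = m ^ α.card := by rw [mk_toType]
  · intro i j hij
    funext γ hγ
    have ht : q ((Ordinal.ToType.mk (o := α)) ⟨γ, hγ⟩) = γ :=
      congrArg Subtype.val (((Ordinal.ToType.mk (o := α))).symm_apply_apply ⟨γ, hγ⟩)
    have h2 : (aPick U α m T (q ((Ordinal.ToType.mk (o := α)) ⟨γ, hγ⟩))).2 i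
        = (aPick U α m T (q ((Ordinal.ToType.mk (o := α)) ⟨γ, hγ⟩))).2 j :=
      congrArg Subtype.val (congrFun hij ((Ordinal.ToType.mk (o := α)) ⟨γ, hγ⟩))
    show (aPick U α m T γ).2 i = (aPick U α m T γ).2 j
    rw [← ht]
    exact h2

/-- Intersection of a finite family of trees. -/
def aInter (S : Set I) (hS : S.Finite) : ClosedUBT A U (α + 1) where
  mem β := {s | ∀ i ∈ S, s ∈ (T i).mem β}
  isTree β γ hβ h s hs := fun i hi => (T i).isTree β γ hβ h s (hs i hi)
  succ β hβ s hs := by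
    have heq : {a : A | oext s a ∈ {t : OSeq A (β+1) | ∀ i ∈ S, t ∈ (T i).mem (β+1)}}
        = ⋂ i ∈ S, {a : A | oext s a ∈ (T i).mem (β + 1)} := by
      ext a; simp [Set.mem_iInter]
    show {a : A | oext s a ∈ {t : OSeq A (β+1) | ∀ i ∈ S, t ∈ (T i).mem (β+1)}} ∈ U
    rw [heq]
    exact (Filter.biInter_mem hS).mpr fun i hi => (T i).succ β hβ s (hs i hi)
  nonsucc β hβ hns s :=
    ⟨fun hs γ h i hi => ((T i).nonsucc β hβ hns s).mp (hs i hi) γ h,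
     fun h i hi => ((T i).nonsucc β hβ hns s).mpr (fun γ hγ => h γ hγ i hi)⟩

theorem aExistsMax (hm : 1 ≤ m) (T0 : ClosedUBT A U (α + 1)) :
    ∃ s : OSeq A α, s ∈ T0.mem α := by
  have hfam1 : ∀ B : PUnit.{u+1} → Set A, (∀ i, B i ∈ U) →
      ∃ X : Set A, Cardinal.mk ↥X ≤ m ∧ ∀ i, (X ∩ B i).Nonempty := by
    intro B hB
    obtain ⟨a, ha⟩ := Ultrafilter.nonempty_of_mem (hB PUnit.unit)
    refine ⟨{a}, by rw [Cardinal.mk_singleton]; exact hm, fun i => ⟨a, rfl, ?_⟩⟩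
    rw [Subsingleton.elim i PUnit.unit]
    exact ha
  exact ⟨aNode U α m (fun _ : PUnit.{u+1} => T0) PUnit.unit α,
    aNode_mem U α m (fun _ : PUnit.{u+1} => T0) hfam1 α le_rfl PUnit.unit⟩

theorem aMemZero (T0 : ClosedUBT A U (0 + 1)) (s : OSeq A 0) : s ∈ T0.mem 0 := by
  refine (T0.nonsucc 0 ?_ ?_ s).mpr (fun γ h => absurd h (not_lt_of_ge zero_le))
  · rw [Ordinal.add_one_eq_succ]; exact Order.lt_succ 0
  · rintro ⟨γ, hγ⟩
    rw [Ordinal.add_one_eq_succ] at hγ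
    exact Ordinal.succ_ne_zero γ hγ.symm

end Aux17

theorem stmt17 {A : Type u} (U : Ultrafilter A) (l m : Cardinal.{u})
    (hU : ∀ S : Set (Set A), (∀ s ∈ S, s ∈ U) → Cardinal.mk ↥S ≤ l →
      ∃ X : Set A, Cardinal.mk ↥X ≤ m ∧ ∀ s ∈ S, (X ∩ s).Nonempty)
    (α : Ordinal.{u}) :
    ((m ^ α.card < l) → ∀ l' : Cardinal.{u}, l' < l → ¬ UMeas.LMARegular U l l' α) ∧
    ((m ^ α.card < (Cardinal.ord l).cof) → ¬ UMeas.LMARegular U l l α) := by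
  classical
  haveI hA : Nonempty A := Set.nonempty_iff_univ_nonempty.mpr (U.nonempty_of_mem Filter.univ_mem)
  have hIl : Cardinal.mk (Cardinal.ord l).ToType = l := Cardinal.mk_ord_toType l
  have hfamI : ∀ B : (Cardinal.ord l).ToType → Set A, (∀ i, B i ∈ U) →
      ∃ X : Set A, Cardinal.mk ↥X ≤ m ∧ ∀ i, (X ∩ B i).Nonempty := by
    intro B hB
    obtain ⟨X, hX, hmeet⟩ := hU (Set.range B) (by rintro s ⟨i, rfl⟩; exact hB i)
      (le_trans Cardinal.mk_range_le hIl.le)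
    exact ⟨X, hX, fun i => hmeet (B i) ⟨i, rfl⟩⟩
  -- contradiction from `hU` when `m = 0` (and `l > 0`)
  have hm0F : m = 0 → 0 < l → False := by
    intro hm hl
    obtain ⟨X, hX, hmeet⟩ := hU {Set.univ}
      (by intro s hs; rw [Set.mem_singleton_iff] at hs; subst hs; exact Filter.univ_mem)
      (by rw [Cardinal.mk_singleton]; exact Cardinal.one_le_iff_pos.mpr hl)
    have hX0 : Cardinal.mk ↥X = 0 := le_antisymm (by rw [← hm]; exact hX) (Cardinal.zero_le _)
    have hXe : IsEmpty ↥X := Cardinal.mk_eq_zero_iff.mp hX0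
    obtain ⟨a, haX, -⟩ := hmeet Set.univ rfl
    exact hXe.elim ⟨a, haX⟩
  -- the trivial case `α = 0`
  have hzeroRoute : α = 0 → ∀ l' : Cardinal.{u}, l' ≤ l → ¬ UMeas.LMARegular U l l' α := by
    rintro rfl l' hl'
    rintro ⟨T, hT⟩
    obtain ⟨S, hS⟩ := Cardinal.le_mk_iff_exists_set.mp (hl'.trans hIl.ge)
    exact hT S hS ⟨fun γ h => absurd h (not_lt_of_ge zero_le),
      fun β _ => aMemZero U (T β) _⟩
  -- the route via finite intersections, for `l' < ℵ₀`
  have hfinRoute : 1 ≤ m → ∀ l' : Cardinal.{u}, l' ≤ l → l' < Cardinal.aleph0 →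
      ¬ UMeas.LMARegular U l l' α := by
    intro hm1 l' hl' hfin
    rintro ⟨T, hT⟩
    obtain ⟨S, hS⟩ := Cardinal.le_mk_iff_exists_set.mp (hl'.trans hIl.ge)
    have hSfin : S.Finite := Cardinal.lt_aleph0_iff_set_finite.mp (by rw [hS]; exact hfin)
    obtain ⟨s, hs⟩ := aExistsMax U α m hm1 (aInter U α T S hSfin)
    exact hT S hS ⟨s, fun β hβ => hs β hβ⟩
  constructor
  · -- part 1
    intro hpow l' hl'
    by_cases hα0 : α = 0
    · exact hzeroRoute hα0 l' hl'.le
    by_cases hm0 : m = 0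
    · exact ((hm0F hm0 ((Cardinal.zero_le _).trans_lt hpow)).elim)
    have hm1 : 1 ≤ m := Cardinal.one_le_iff_ne_zero.mpr hm0
    rcases lt_or_ge l' Cardinal.aleph0 with hfin | hinf
    · exact hfinRoute hm1 l' hl'.le hfin
    have hlinf : Cardinal.aleph0 ≤ l := hinf.trans hl'.le
    rintro ⟨T, hT⟩
    obtain ⟨W, Ψ, Φ, hW, hmem, hinj⟩ := aMaster U α m T hfamI
    have hsum : l = Cardinal.sum fun w : W => Cardinal.mk {i // Ψ i = w} := by
      rw [← Cardinal.mk_sigma]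
      rw [Cardinal.mk_congr (Equiv.sigmaFiberEquiv Ψ)]
      exact hIl.symm
    have hbig : ∃ w : W, l' ≤ Cardinal.mk {i // Ψ i = w} := by
      by_contra hno
      push_neg at hno
      have h1 : l ≤ m ^ α.card * l' := by
        calc l = Cardinal.sum fun w : W => Cardinal.mk {i // Ψ i = w} := hsum
          _ ≤ Cardinal.sum (fun _ : W => l') := Cardinal.sum_le_sum _ _ (fun w => (hno w).le)
          _ = Cardinal.mk W * l' := Cardinal.sum_const' _ _
          _ ≤ m ^ α.card * l' := mul_le_mul_left hW _
      exact absurd (h1.trans_lt (Cardinal.mul_lt_of_lt hlinf hpow hl')) (lt_irrefl l)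
    obtain ⟨w, hw⟩ := hbig
    obtain ⟨p, hp⟩ := Cardinal.le_mk_iff_exists_set.mp hw
    refine hT (Subtype.val '' p) ?_ ?_
    · rw [Cardinal.mk_image_eq Subtype.val_injective, hp]
    · rcases Set.eq_empty_or_nonempty (Subtype.val '' p) with hSe | ⟨i₀, hi₀⟩
      · refine ⟨fun _ _ => Classical.arbitrary A, fun β hβ => ?_⟩
        rw [hSe] at hβ
        exact absurd hβ (Set.notMem_empty β)
      · have hΨi₀ : Ψ i₀ = w := by
          obtain ⟨x0, -, hx0⟩ := hi₀
          rw [← hx0]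
          exact x0.2
        refine ⟨Φ i₀, fun β hβ => ?_⟩
        obtain ⟨⟨β', hβ'⟩, -, rfl⟩ := hβ
        rw [← hinj β' i₀ (hβ'.trans hΨi₀.symm)]
        exact hmem β'
  · -- part 2
    intro hpow
    by_cases hα0 : α = 0
    · exact hzeroRoute hα0 l le_rfl
    by_cases hm0 : m = 0
    · have h0l : 0 < l := (((Cardinal.zero_le _).trans_lt hpow).trans_le (Ordinal.cof_ord_le l))
      exact (hm0F hm0 h0l).elim
    have hm1 : 1 ≤ m := Cardinal.one_le_iff_ne_zero.mpr hm0
    rcases lt_or_ge l Cardinal.aleph0 with hfin | hinf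
    · exact hfinRoute hm1 l le_rfl hfin
    rintro ⟨T, hT⟩
    obtain ⟨W, Ψ, Φ, hW, hmem, hinj⟩ := aMaster U α m T hfamI
    have hsum : l = Cardinal.sum fun w : W => Cardinal.mk {i // Ψ i = w} := by
      rw [← Cardinal.mk_sigma]
      rw [Cardinal.mk_congr (Equiv.sigmaFiberEquiv Ψ)]
      exact hIl.symm
    have hbig : ∃ w : W, Cardinal.mk {i // Ψ i = w} = l := by
      by_contra hno
      push_neg at hno
      have hlt : ∀ w : W, Cardinal.mk {i // Ψ i = w} < l := fun w =>
        lt_of_le_of_ne ((Cardinal.mk_subtype_le _).trans hIl.le) (hno w)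
      have hWcof : Cardinal.mk W < (Cardinal.ord l).cof := hW.trans_lt hpow
      have h1 : iSup (fun w : W => Cardinal.mk {i // Ψ i = w}) < l :=
        Cardinal.iSup_lt_of_lt_cof_ord hWcof hlt
      have h2 : l < l := by
        calc l = Cardinal.sum fun w : W => Cardinal.mk {i // Ψ i = w} := hsum
          _ ≤ Cardinal.mk W * iSup (fun w : W => Cardinal.mk {i // Ψ i = w}) :=
            Cardinal.sum_le_mk_mul_iSup _
          _ < l := Cardinal.mul_lt_of_lt hinf
            (lt_of_lt_of_le hWcof (Ordinal.cof_ord_le l)) h1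
      exact absurd h2 (lt_irrefl l)
    obtain ⟨w, hw⟩ := hbig
    refine hT {i | Ψ i = w} hw ?_
    have hne : Nonempty {i // Ψ i = w} := Cardinal.mk_ne_zero_iff.mp
      (by rw [hw]; exact ne_of_gt (Cardinal.aleph0_pos.trans_le hinf))
    obtain ⟨⟨i₀, hi₀⟩⟩ := hne
    refine ⟨Φ i₀, fun β hβ => ?_⟩
    rw [← hinj β i₀ (hβ.trans hi₀.symm)]
    exact hmem β
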